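/- (Extended Kronecker product rule.) Let n ≥ 1 and for each i = 1,…,n let A_i : ℝ^{n_x} → M_{r_i×s_i}(ℝ) be differentiable at x ∈ ℝ^{n_x}. Then ∂(A_1 ⊗ … ⊗ A_n)/∂x'(x) = Σ_{k=1}^{n} ( A_1(x) ⊗ … ⊗ A_{k-1}(x) ⊗ (∂A_k/∂x')(x) ⊗ A_{k+1}(x) ⊗ … ⊗ A_n(x) ) · ( I_{s_1⋯s_k} ⊗ K_{n_x, s_{k+1}⋯s_n} ), after canonical identification of the product index sets (the term k = n has K_{n_x,1} = I_{n_x}, so it reads A_1(x) ⊗ … ⊗ A_{n-1}(x) ⊗ (∂A_n/∂x')(x)). -/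
import Mathlib


open Kronecker Matrix

noncomputable section

/-- The derivative matrix `∂F/∂x'` of a matrix-valued map: entry in row `i`
and column `(j, k)` is `∂F_{ij}/∂x_k`. -/
def matDeriv {nx : ℕ} {α β : Type*} (F : (Fin nx → ℝ) → Matrix α β ℝ) (x : Fin nx → ℝ) :
    Matrix α (β × Fin nx) ℝ :=
  Matrix.of fun i jk => fderiv ℝ (fun y => F y i jk.1) x (Pi.single jk.2 1)

/-- Elementary matrix with a single `1` at position `(i, j)`. -/
def elemM {α β : Type*} [DecidableEq α] [DecidableEq β] (i : α) (j : β) :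
    Matrix α β ℝ :=
  Matrix.of fun a b => if a = i ∧ b = j then 1 else 0

/-- The commutation matrix `K_{α,β} = ∑_{i,j} E^{i,j} ⊗ E^{j,i}`, characterized
by `K_{α,β} (x ⊗ y) = y ⊗ x`. -/
def commM (α β : Type*) [Fintype α] [Fintype β] [DecidableEq α] [DecidableEq β] :
    Matrix (α × β) (β × α) ℝ :=
  ∑ i : α, ∑ j : β, elemM i j ⊗ₖ elemM j i

/-- Kronecker product of a finite family of matrices, rows and columns indexed
by tuples via the canonical identification of the iterated product index sets. -/
def kron' {m : ℕ} {ι κ : Fin m → Type*} (M : ∀ t, Matrix (ι t) (κ t) ℝ) :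
    Matrix (∀ t, ι t) (∀ t, κ t) ℝ :=
  Matrix.of fun a b => ∏ t, M t (a t) (b t)

lemma commM_apply {α β : Type*} [Fintype α] [Fintype β] [DecidableEq α] [DecidableEq β]
    (a : α) (b : β) (c : β) (d : α) :
    commM α β (a, b) (c, d) = if a = d ∧ b = c then 1 else 0 := by
  simp only [commM, elemM, Matrix.sum_apply, kroneckerMap_apply, Matrix.of_apply, ite_and,
    mul_ite, mul_one, mul_zero, ite_mul, one_mul, zero_mul]
  rw [Finset.sum_comm]
  simp [Finset.sum_ite_eq, ite_and, eq_comm, and_comm]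

universe u v
lemma cast_mat_apply {α : Type*} {β β' : Type u} (e : β = β') (M : Matrix α β' ℝ) (i : α) (c : β) :
    (cast (congrArg (fun γ => Matrix α γ ℝ) e).symm M) i c = M i (cast e c) := by
  subst e; rfl

lemma cast_symm_cast {α β : Sort u} (e : α = β) (a : α) : cast e.symm (cast e a) = a := by
  subst e; rfl

lemma cast_cast_symm {α β : Sort u} (e : α = β) (b : β) : cast e (cast e.symm b) = b := by
  subst e; rfl

lemma eq_cast_symm_of_cast_eq {α β : Sort u} (e : α = β) {a : α} {b : β} (h : cast e a = b) :
    a = cast e.symm b := by subst e; simpa using h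

/-- Extended Kronecker product rule:
`∂(A_1 ⊗ ⋯ ⊗ A_n)/∂x' = ∑_{k=1}^n (A_1 ⊗ ⋯ ⊗ ∂A_k/∂x' ⊗ ⋯ ⊗ A_n)
  (I_{s_1⋯s_k} ⊗ K_{n_x, s_{k+1}⋯s_n})`,
after the canonical identification of the product index sets. -/
theorem matDeriv_kron_extended {nx : ℕ} (n : ℕ) (hn : 1 ≤ n) (r s : Fin n → ℕ)
    (A : ∀ t : Fin n, (Fin nx → ℝ) → Matrix (Fin (r t)) (Fin (s t)) ℝ)
    (x : Fin nx → ℝ)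
    (hA : ∀ t i j, DifferentiableAt ℝ (fun y => A t y i j) x)
    [inst : ∀ k t : Fin n, Fintype (if t = k then Fin (s t) × Fin nx else Fin (s t))] :
    matDeriv (fun y => kron' fun t => A t y) x =
      ∑ k : Fin n,
        kron' (fun t =>
            (if h : t = k then
              cast (congrArg (fun β => Matrix (Fin (r t)) β ℝ) (if_pos h)).symm (matDeriv (A t) x)
            else
              cast (congrArg (fun β => Matrix (Fin (r t)) β ℝ) (if_neg h)).symm (A t x) :
              Matrix (Fin (r t)) (if t = k then Fin (s t) × Fin nx else Fin (s t)) ℝ)) *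
          ((1 : Matrix (∀ t' : {t' : Fin n // t' ≤ k}, Fin (s t'.1))
                (∀ t' : {t' : Fin n // t' ≤ k}, Fin (s t'.1)) ℝ) ⊗ₖ
              commM (Fin nx) (∀ t' : {t' : Fin n // k < t'}, Fin (s t'.1))).submatrix
            (fun c : ∀ t, (if t = k then Fin (s t) × Fin nx else Fin (s t)) =>
              ((fun t' => if h : t'.1 = k then (cast (if_pos h) (c t'.1)).1
                  else cast (if_neg h) (c t'.1)),
               ((cast (if_pos rfl) (c k)).2,
                fun t' => cast (if_neg t'.2.ne') (c t'.1))))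
            (fun c : (∀ t, Fin (s t)) × Fin nx =>
              ((fun t' => c.1 t'.1), ((fun t' => c.1 t'.1), c.2))) := by
  ext i jm
  obtain ⟨j, m⟩ := jm
  rw [Matrix.sum_apply]
  have hL : matDeriv (fun y => kron' fun t => A t y) x i (j, m)
      = ∑ k : Fin n, (∏ t ∈ Finset.univ.erase k, A t x (i t) (j t)) *
          fderiv ℝ (fun y => A k y (i k) (j k)) x (Pi.single m 1) := by
    have hfd : HasFDerivAt (fun y => ∏ t : Fin n, A t y (i t) (j t))
        (∑ t : Fin n, (∏ u ∈ Finset.univ.erase t, A u x (i u) (j u)) •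
          fderiv ℝ (fun y => A t y (i t) (j t)) x) x :=
      HasFDerivAt.finset_prod fun t _ => (hA t (i t) (j t)).hasFDerivAt
    show fderiv ℝ (fun y => kron' (fun t => A t y) i j) x (Pi.single m 1) = _
    have he : (fun y => kron' (fun t => A t y) i j) = fun y => ∏ t, A t y (i t) (j t) := rfl
    rw [he, hfd.fderiv]
    simp [ContinuousLinearMap.sum_apply]
  rw [hL]
  refine Finset.sum_congr rfl fun k _ => ?_
  rw [Matrix.mul_apply]
  set c₀ : ∀ t, (if t = k then Fin (s t) × Fin nx else Fin (s t)) :=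
    fun t => if h : t = k then cast (if_pos h).symm (j t, m) else cast (if_neg h).symm (j t)
    with hc₀
  -- key uniqueness
  have key : ∀ b : ∀ t, (if t = k then Fin (s t) × Fin nx else Fin (s t)),
      (fun t' : {t' : Fin n // t' ≤ k} => if h : t'.1 = k then (cast (if_pos h) (b t'.1)).1
          else cast (if_neg h) (b t'.1)) = (fun t' : {t' : Fin n // t' ≤ k} => j t'.1) →
      (cast (if_pos rfl) (b k)).2 = m →
      (fun t' : {t' : Fin n // k < t'} => cast (if_neg t'.2.ne') (b t'.1)) =
        (fun t' : {t' : Fin n // k < t'} => j t'.1) →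
      b = c₀ := by
    intro b h1 h2 h3
    funext t
    by_cases h : t = k
    · subst h
      have e1 := congrFun h1 ⟨t, le_rfl⟩
      rw [dif_pos rfl] at e1
      have hp : cast (if_pos rfl) (b t) = (j t, m) := Prod.ext e1 h2
      have hbt := eq_cast_symm_of_cast_eq _ hp
      rw [hbt, hc₀]
      simp
    · rcases le_or_gt t k with hle | hlt
      · have e1 := congrFun h1 ⟨t, hle⟩
        rw [dif_neg h] at e1
        have hbt := eq_cast_symm_of_cast_eq _ e1
        rw [hbt, hc₀]
        simp [h]
      · have e1 := congrFun h3 ⟨t, hlt⟩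
        have hbt := eq_cast_symm_of_cast_eq _ e1
        rw [hbt, hc₀]
        simp [h]
  rw [Finset.sum_eq_single c₀]
  · -- main term
    have hsub : ((1 : Matrix (∀ t' : {t' : Fin n // t' ≤ k}, Fin (s t'.1))
                (∀ t' : {t' : Fin n // t' ≤ k}, Fin (s t'.1)) ℝ) ⊗ₖ
              commM (Fin nx) (∀ t' : {t' : Fin n // k < t'}, Fin (s t'.1))).submatrix
            (fun c : ∀ t, (if t = k then Fin (s t) × Fin nx else Fin (s t)) =>
              ((fun t' => if h : t'.1 = k then (cast (if_pos h) (c t'.1)).1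
                  else cast (if_neg h) (c t'.1)),
               ((cast (if_pos rfl) (c k)).2,
                fun t' => cast (if_neg t'.2.ne') (c t'.1))))
            (fun c : (∀ t, Fin (s t)) × Fin nx =>
              ((fun t' => c.1 t'.1), ((fun t' => c.1 t'.1), c.2))) c₀ (j, m) = 1 := by
      have hr1 : (fun t' : {t' : Fin n // t' ≤ k} =>
            if h : t'.1 = k then (cast (if_pos h) (c₀ t'.1)).1 else cast (if_neg h) (c₀ t'.1))
          = (fun t' : {t' : Fin n // t' ≤ k} => j t'.1) := by
        funext t'
        by_cases h : t'.1 = k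
        · rw [dif_pos h, hc₀]
          simp [h]
        · rw [dif_neg h, hc₀]
          simp [h]
      have hr2 : (cast (if_pos rfl) (c₀ k)).2 = m := by
        rw [hc₀]; simp
      have hr3 : (fun t' : {t' : Fin n // k < t'} => cast (if_neg t'.2.ne') (c₀ t'.1)) =
          (fun t' : {t' : Fin n // k < t'} => j t'.1) := by
        funext t'
        rw [hc₀]
        simp [t'.2.ne']
      rw [Matrix.submatrix_apply]
      simp only [hr1, hr3]
      rw [kroneckerMap_apply, Matrix.one_apply_eq]
      rw [show ((cast (if_pos rfl) (c₀ k)).2, fun t' : {t' : Fin n // k < t'} => j t'.1) =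
          (m, fun t' : {t' : Fin n // k < t'} => j t'.1) from by rw [hr2]]
      rw [commM_apply]
      simp
    rw [hsub, mul_one]
    have hkron : kron' (fun t =>
            (if h : t = k then
              cast (congrArg (fun β => Matrix (Fin (r t)) β ℝ) (if_pos h)).symm (matDeriv (A t) x)
            else
              cast (congrArg (fun β => Matrix (Fin (r t)) β ℝ) (if_neg h)).symm (A t x) :
              Matrix (Fin (r t)) (if t = k then Fin (s t) × Fin nx else Fin (s t)) ℝ)) i c₀
        = ∏ t, (if h : t = k then
              cast (congrArg (fun β => Matrix (Fin (r t)) β ℝ) (if_pos h)).symm (matDeriv (A t) x)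
            else
              cast (congrArg (fun β => Matrix (Fin (r t)) β ℝ) (if_neg h)).symm (A t x) :
              Matrix (Fin (r t)) (if t = k then Fin (s t) × Fin nx else Fin (s t)) ℝ)
              (i t) (c₀ t) := rfl
    rw [hkron, ← Finset.mul_prod_erase _ _ (Finset.mem_univ k)]
    have hck : c₀ k = cast (if_pos rfl :
        (if k = k then Fin (s k) × Fin nx else Fin (s k)) = (Fin (s k) × Fin nx)).symm (j k, m) := by
      rw [hc₀]; simp
    have hk : (if h : k = k then
              cast (congrArg (fun β => Matrix (Fin (r k)) β ℝ) (if_pos h)).symm (matDeriv (A k) x)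
            else
              cast (congrArg (fun β => Matrix (Fin (r k)) β ℝ) (if_neg h)).symm (A k x)) (i k) (c₀ k)
        = fderiv ℝ (fun y => A k y (i k) (j k)) x (Pi.single m 1) := by
      rw [dif_pos rfl, cast_mat_apply (if_pos rfl), hck, cast_cast_symm]
      rfl
    have herase : ∀ t ∈ Finset.univ.erase k, (if h : t = k then
              cast (congrArg (fun β => Matrix (Fin (r t)) β ℝ) (if_pos h)).symm (matDeriv (A t) x)
            else
              cast (congrArg (fun β => Matrix (Fin (r t)) β ℝ) (if_neg h)).symm (A t x)) (i t) (c₀ t)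
        = A t x (i t) (j t) := by
      intro t ht
      have ht' : t ≠ k := (Finset.mem_erase.mp ht).1
      have hct : c₀ t = cast (if_neg ht' :
          (if t = k then Fin (s t) × Fin nx else Fin (s t)) = Fin (s t)).symm (j t) := by
        rw [hc₀]; simp [ht']
      rw [dif_neg ht', cast_mat_apply (if_neg ht'), hct, cast_cast_symm]
    rw [hk, Finset.prod_congr rfl herase]
    exact mul_comm _ _
  · intro b _ hb
    rw [Matrix.submatrix_apply, kroneckerMap_apply, commM_apply]
    by_cases h1 : (fun t' : {t' : Fin n // t' ≤ k} =>
          if h : t'.1 = k then (cast (if_pos h) (b t'.1)).1 else cast (if_neg h) (b t'.1))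
        = (fun t' : {t' : Fin n // t' ≤ k} => j t'.1)
    · by_cases h2 : (cast (if_pos rfl) (b k)).2 = m ∧
          (fun t' : {t' : Fin n // k < t'} => cast (if_neg t'.2.ne') (b t'.1)) =
            (fun t' : {t' : Fin n // k < t'} => j t'.1)
      · exact absurd (key b h1 h2.1 h2.2) hb
      · rw [if_neg h2]
        simp
    · rw [Matrix.one_apply_ne h1]
      simp
  · intro h
    exact absurd (Finset.mem_univ c₀) h

end
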